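/- Let A, B be d×d complex matrices with equal diagonals such that every entry of A is a nonnegative real number, B is positive semidefinite, and A_ij·A_ji ≥ |B_ij|² for all i,j ∈ [d]. Then: (i) if B is diagonally dominant, i.e. B_ii ≥ Σ_{j≠i} |B_ij| for every i (the diagonal entries of a positive semidefinite matrix are real), then the comparison matrix M(B) is positive semidefinite; and (ii) if the comparison matrix M(B) is positive semidefinite, then the pair (A,B) is pairwise completely positive (PCP). -/

import Mathlib

open Matrix
open scoped ComplexOrder

/-- Pairwise complete positivity of a pair `(A,B)`. -/
def PCP {d : ℕ} (A B : Matrix (Fin d) (Fin d) ℂ) : Prop :=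
  ∃ (d' : ℕ) (V W : Matrix (Fin d) (Fin d') ℂ),
    A = (V ⊙ V.map star) * (W ⊙ W.map star)ᴴ ∧
    B = (V ⊙ W) * (V ⊙ W)ᴴ

/-- The comparison matrix `M(Z)`: `M(Z)_ii = |Z_ii|`, `M(Z)_ij = −|Z_ij|` for `i ≠ j`. -/
noncomputable def comparisonMatrix {d : ℕ} (Z : Matrix (Fin d) (Fin d) ℂ) :
    Matrix (Fin d) (Fin d) ℝ :=
  Matrix.of fun i j => if i = j then ‖Z i j‖ else -‖Z i j‖

variable {d : ℕ}

lemma pcp_of_sums (A B : Matrix (Fin d) (Fin d) ℂ) (ι : Type) [Fintype ι]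
    (v w : ι → Fin d → ℂ)
    (hA : ∀ i j, A i j = ∑ c, (v c i * star (v c i)) * star (w c j * star (w c j)))
    (hB : ∀ i j, B i j = ∑ c, (v c i * w c i) * star (v c j * w c j)) :
    PCP A B := by
  classical
  let e : Fin (Fintype.card ι) ≃ ι := (Fintype.equivFin ι).symm
  refine ⟨Fintype.card ι, Matrix.of fun i c => v (e c) i, Matrix.of fun i c => w (e c) i, ?_, ?_⟩
  · ext i j
    rw [hA i j, Matrix.mul_apply]
    rw [← Equiv.sum_comp e (fun c => (v c i * star (v c i)) * star (w c j * star (w c j)))]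
    refine Finset.sum_congr rfl fun c _ => ?_
    simp [Matrix.hadamard, conjTranspose_apply, Matrix.map_apply]
  · ext i j
    rw [hB i j, Matrix.mul_apply]
    rw [← Equiv.sum_comp e (fun c => (v c i * w c i) * star (v c j * w c j))]
    refine Finset.sum_congr rfl fun c _ => ?_
    simp [Matrix.hadamard, conjTranspose_apply]




variable {d : ℕ}

lemma cm_apply (Z : Matrix (Fin d) (Fin d) ℂ) (i j : Fin d) :
    comparisonMatrix Z i j = if i = j then ‖Z i j‖ else -‖Z i j‖ := rfl

lemma abs_symm {B : Matrix (Fin d) (Fin d) ℂ} (hB : B.IsHermitian) (i j : Fin d) :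
    ‖B i j‖ = ‖B j i‖ := by
  rw [← hB.apply j i]; simp

lemma diag_nonneg' {B : Matrix (Fin d) (Fin d) ℂ} (hB : B.PosSemidef) (i : Fin d) :
    B i i = ((B i i).re : ℂ) ∧ 0 ≤ (B i i).re := by
  have h := hB.dotProduct_mulVec_nonneg (Pi.single i 1)
  have he : star (Pi.single i 1) ⬝ᵥ B *ᵥ (Pi.single i (1:ℂ)) = B i i := by
    simp [dotProduct, mulVec, Pi.single_apply]
  rw [he, Complex.le_def] at h
  simp only [Complex.zero_re, Complex.zero_im] at h
  refine ⟨?_, h.1⟩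
  apply Complex.ext <;> simp [← h.2]

lemma abs_diag {B : Matrix (Fin d) (Fin d) ℂ} (hB : B.PosSemidef) (i : Fin d) :
    ‖B i i‖ = (B i i).re := by
  obtain ⟨h1, h2⟩ := diag_nonneg' hB i
  rw [h1]; simpa using h2

lemma partI {B : Matrix (Fin d) (Fin d) ℂ} (hB : B.PosSemidef)
    (hdd : ∀ i, ∑ j, (if j = i then 0 else ‖B i j‖) ≤ (B i i).re) :
    (comparisonMatrix B).PosSemidef := by
  set b : Fin d → Fin d → ℝ := fun i j => ‖B i j‖ with hb
  have hbs : ∀ i j, b i j = b j i := fun i j => abs_symm hB.isHermitian i j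
  have hb0 : ∀ i j, 0 ≤ b i j := fun i j => norm_nonneg _
  refine PosSemidef.of_dotProduct_mulVec_nonneg ?_ ?_
  · ext i j
    simp only [conjTranspose_apply, cm_apply, star_trivial]
    rcases eq_or_ne i j with rfl | hij
    · simp
    · simp [hij, Ne.symm hij]
      exact abs_symm hB.isHermitian j i
  · intro x
    have hsx : star x = x := by simp
    rw [hsx]
    have expand : x ⬝ᵥ (comparisonMatrix B) *ᵥ x
        = ∑ i, ∑ j, (if i = j then b i i * (x i)^2 else -(b i j * (x i * x j))) := by
      simp only [dotProduct, mulVec, Finset.mul_sum]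
      refine Finset.sum_congr rfl fun i _ => Finset.sum_congr rfl fun j _ => ?_
      rcases eq_or_ne i j with rfl | hij
      · simp [cm_apply]; ring
      · simp [cm_apply, hij]; ring
    rw [expand]
    have step1 : ∑ i, ∑ j, (if i = j then b i i * (x i)^2 else -(b i j * ((x i)^2 + (x j)^2)/2))
        ≤ ∑ i, ∑ j, (if i = j then b i i * (x i)^2 else -(b i j * (x i * x j))) := by
      refine Finset.sum_le_sum fun i _ => Finset.sum_le_sum fun j _ => ?_
      rcases eq_or_ne i j with rfl | hij
      · simp
      · rw [if_neg hij, if_neg hij]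
        have h2 : x i * x j ≤ ((x i)^2 + (x j)^2)/2 := by nlinarith [sq_nonneg (x i - x j)]
        have h3 := mul_le_mul_of_nonneg_left h2 (hb0 i j)
        have h4 : b i j * (((x i)^2 + (x j)^2)/2) = b i j * ((x i)^2 + (x j)^2)/2 := by ring
        linarith
    refine le_trans ?_ step1
    have swap : ∑ i, ∑ j, (if i = j then (0:ℝ) else b i j * (x j)^2)
        = ∑ i, ∑ j, (if i = j then (0:ℝ) else b i j * (x i)^2) := by
      rw [Finset.sum_comm]
      refine Finset.sum_congr rfl fun i _ => Finset.sum_congr rfl fun j _ => ?_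
      rcases eq_or_ne i j with rfl | hij
      · simp
      · simp [hij, Ne.symm hij, hbs j i]
    have rewrite1 : ∑ i, ∑ j, (if i = j then b i i * (x i)^2 else -(b i j * ((x i)^2 + (x j)^2)/2))
        = ∑ i, (x i)^2 * (b i i - ∑ j, (if j = i then 0 else b i j)) := by
      have e1 : ∀ i j : Fin d, (if i = j then b i i * (x i)^2 else -(b i j * ((x i)^2 + (x j)^2)/2))
          = (if i = j then b i i * (x i)^2 else 0)
            - (if i = j then (0:ℝ) else b i j * (x i)^2) / 2
            - (if i = j then (0:ℝ) else b i j * (x j)^2) / 2 := by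
        intro i j
        rcases eq_or_ne i j with rfl | hij
        · simp
        · simp [hij]; ring
      simp only [e1, Finset.sum_sub_distrib, ← Finset.sum_div]
      rw [swap]
      simp only [Finset.sum_ite_eq, Finset.mem_univ, if_true]
      rw [sub_sub, ← add_div, add_self_div_two, ← Finset.sum_sub_distrib]
      have hsplit : ∀ i : Fin d, (∑ j, if i = j then (0:ℝ) else b i j * x i ^ 2)
          = x i ^ 2 * ∑ j, (if j = i then 0 else b i j) := by
        intro i
        rw [Finset.mul_sum]
        refine Finset.sum_congr rfl fun j _ => ?_
        rcases eq_or_ne i j with rfl | hij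
        · simp
        · simp only [if_neg hij, if_neg (Ne.symm hij)]; ring
      refine Finset.sum_congr rfl fun i _ => ?_
      rw [hsplit]
      ring
    rw [rewrite1]
    refine Finset.sum_nonneg fun i _ => mul_nonneg (sq_nonneg _) (sub_nonneg.2 ?_)
    have := hdd i
    rw [hb]
    simpa [abs_diag hB i] using this


variable {d : ℕ}

lemma kerAbs {M : Matrix (Fin d) (Fin d) ℝ} (hM : M.PosSemidef)
    (hZ : ∀ i j, i ≠ j → M i j ≤ 0) {x : Fin d → ℝ} (hx : M *ᵥ x = 0) :
    M *ᵥ (fun i => |x i|) = 0 := by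
  rw [← hM.dotProduct_mulVec_zero_iff]
  have h1 : (fun i => |x i|) ⬝ᵥ M *ᵥ (fun i => |x i|) ≤ x ⬝ᵥ M *ᵥ x := by
    simp only [dotProduct, mulVec, Finset.mul_sum]
    refine Finset.sum_le_sum fun i _ => Finset.sum_le_sum fun j _ => ?_
    rcases eq_or_ne i j with rfl | hij
    · rw [show |x i| * (M i i * |x i|) = M i i * (|x i| * |x i|) by ring, abs_mul_abs_self,
        show x i * (M i i * x i) = M i i * (x i * x i) by ring]
    · have h2 : |x i| * (M i j * |x j|) = M i j * |x i * x j| := by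
        rw [abs_mul]; ring
      have h3 : x i * (M i j * x j) = M i j * (x i * x j) := by ring
      rw [h2, h3]
      rcases le_or_gt (x i * x j) (|x i * x j|) with h4 | h4
      · exact mul_le_mul_of_nonpos_left h4 (hZ i j hij)
      · linarith [le_abs_self (x i * x j)]
  have h2 : x ⬝ᵥ M *ᵥ x = 0 := by rw [hx]; simp
  have h3 := hM.dotProduct_mulVec_nonneg (fun i => |x i|)
  simp only [star_trivial] at h3
  have hsx : star (fun i => |x i|) = (fun i => |x i|) := by simp
  rw [hsx]
  linarith [h1, h3]

lemma exists_scaling {M : Matrix (Fin d) (Fin d) ℝ} (hM : M.PosSemidef)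
    (hZ : ∀ i j, i ≠ j → M i j ≤ 0) :
    ∃ t : Fin d → ℝ, (∀ i, 0 < t i) ∧ ∀ i, 0 ≤ (M *ᵥ t) i := by
  classical
  have hsym : ∀ i j, M i j = M j i := fun i j => by
    rw [← hM.isHermitian.apply j i]; simp
  -- the support of the kernel
  set Sp : Fin d → Prop := fun i => ∃ x, M *ᵥ x = 0 ∧ x i ≠ 0 with hSp
  -- a nonnegative kernel vector positive exactly on Sp
  set xw : Fin d → (Fin d → ℝ) := fun i => if h : Sp i then Classical.choose h else 0 with hxw
  have hxwker : ∀ i, M *ᵥ (xw i) = 0 := by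
    intro i
    rw [hxw]
    by_cases h : Sp i
    · simp only [dif_pos h]
      exact (Classical.choose_spec h).1
    · simp [dif_neg h]
  have hxwi : ∀ i, Sp i → xw i i ≠ 0 := by
    intro i h
    rw [hxw]; simp only [dif_pos h]
    exact (Classical.choose_spec h).2
  set u : Fin d → ℝ := fun j => ∑ i, |xw i j| with hu
  have hu0 : ∀ j, 0 ≤ u j := fun j => Finset.sum_nonneg fun i _ => abs_nonneg _
  have huker : M *ᵥ u = 0 := by
    have : u = ∑ i, (fun j => |xw i j|) := by
      funext j; rw [hu]; simp
    funext k
    have h2 : (M *ᵥ u) k = ∑ i, (M *ᵥ (fun j => |xw i j|)) k := by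
      simp only [mulVec, dotProduct, hu, Finset.mul_sum]
      rw [Finset.sum_comm]
    have h3 : (M *ᵥ u) k = 0 := by
      rw [h2]
      refine Finset.sum_eq_zero fun i _ => ?_
      rw [kerAbs hM hZ (hxwker i)]; rfl
    simpa using h3
  have huS : ∀ i, Sp i → 0 < u i := by
    intro i h
    have h1 : |xw i i| > 0 := abs_pos.2 (hxwi i h)
    have h2 : ∀ k ∈ Finset.univ, (0:ℝ) ≤ |xw k i| := fun k _ => abs_nonneg _
    calc (0:ℝ) < |xw i i| := h1
    _ ≤ u i := Finset.single_le_sum h2 (Finset.mem_univ i)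
  have hkerS : ∀ x, M *ᵥ x = 0 → ∀ i, ¬ Sp i → x i = 0 := by
    intro x hx i hi
    by_contra h
    exact hi ⟨x, hx, h⟩
  have huSc : ∀ i, ¬ Sp i → u i = 0 := by
    intro i hi
    rw [hu]
    refine Finset.sum_eq_zero fun k _ => ?_
    rw [abs_eq_zero]
    exact hkerS (xw k) (hxwker k) i hi
  -- block structure
  have hblock : ∀ i j, ¬ Sp i → Sp j → M i j = 0 := by
    intro i j hi hj
    have hij : i ≠ j := fun h => hi (h ▸ hj)
    have h0 : (M *ᵥ u) i = 0 := by rw [huker]; rfl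
    have hterms : ∀ k ∈ Finset.univ, M i k * u k ≤ 0 := by
      intro k _
      by_cases hk : Sp k
      · have hik : i ≠ k := fun h => hi (h ▸ hk)
        exact mul_nonpos_of_nonpos_of_nonneg (hZ i k hik) (hu0 k)
      · rw [huSc k hk, mul_zero]
    have hsum : ∑ k, M i k * u k = 0 := by
      simpa [mulVec, dotProduct] using h0
    have hzero := (Finset.sum_eq_zero_iff_of_nonpos hterms).1 hsum
    have := hzero j (Finset.mem_univ j)
    rcases mul_eq_zero.1 this with h | h
    · exact h
    · exact absurd h (ne_of_gt (huS j hj))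
  have hblock' : ∀ i j, Sp i → ¬ Sp j → M i j = 0 := fun i j hi hj => by
    rw [hsym]; exact hblock j i hj hi
  -- the positive definite correction
  set N : Matrix (Fin d) (Fin d) ℝ := M + Matrix.diagonal (fun i => if Sp i then 1 else 0) with hN
  have hNoff : ∀ i j, i ≠ j → N i j = M i j := by
    intro i j hij
    rw [hN]
    simp [Matrix.diagonal_apply_ne _ hij]
  have hNpd : N.PosDef := by
    refine PosDef.of_dotProduct_mulVec_pos ?_ ?_
    · exact IsHermitian.add hM.isHermitian (Matrix.isHermitian_diagonal _)
    · intro x hx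
      have hq : star x ⬝ᵥ N *ᵥ x = x ⬝ᵥ M *ᵥ x + ∑ i, (if Sp i then 1 else 0) * (x i)^2 := by
        rw [hN]
        simp only [star_trivial, add_mulVec, dotProduct_add]
        congr 1
        simp [dotProduct, mulVec_diagonal]
        refine Finset.sum_congr rfl fun i _ => ?_
        by_cases h : Sp i <;> simp [h] <;> ring
      rw [hq]
      have h1 : 0 ≤ x ⬝ᵥ M *ᵥ x := by
        have := hM.dotProduct_mulVec_nonneg x; simpa using this
      have h2 : 0 ≤ ∑ i, (if Sp i then (1:ℝ) else 0) * (x i)^2 :=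
        Finset.sum_nonneg fun i _ => by positivity
      rcases lt_or_eq_of_le h1 with h | h
      · linarith
      · -- x ⬝ᵥ M x = 0, so M x = 0, so x vanishes off Sp; then the diagonal part is positive
        have hker : M *ᵥ x = 0 := by
          rw [← hM.dotProduct_mulVec_zero_iff]
          simpa using h.symm
        have hxS : ∀ i, ¬ Sp i → x i = 0 := hkerS x hker
        have hxne : ∃ i, x i ≠ 0 := Function.ne_iff.1 hx
        obtain ⟨i, hi⟩ := hxne
        have hSi : Sp i := by
          by_contra hc
          exact hi (hxS i hc)
        have h3 : 0 < ∑ k, (if Sp k then (1:ℝ) else 0) * (x k)^2 := by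
          refine Finset.sum_pos' (fun k _ => by positivity) ⟨i, Finset.mem_univ i, ?_⟩
          simp [hSi]
          positivity
        linarith
  have hNunit : IsUnit N.det := isUnit_iff_ne_zero.2 hNpd.det_pos.ne'
  set r : Fin d → ℝ := fun i => if Sp i then 0 else 1 with hr
  set s : Fin d → ℝ := N⁻¹ *ᵥ r with hs
  have hNs : N *ᵥ s = r := by
    rw [hs, mulVec_mulVec, Matrix.mul_nonsing_inv _ hNunit, one_mulVec]
  set aneg : Fin d → ℝ := fun i => max (-s i) 0 with ha
  have haneg0 : ∀ i, 0 ≤ aneg i := fun i => le_max_right _ _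
  have hsum1 : 0 ≤ aneg ⬝ᵥ (N *ᵥ s) := by
    rw [hNs]
    refine Finset.sum_nonneg fun i _ => mul_nonneg (haneg0 i) ?_
    rw [hr]; by_cases h : Sp i <;> simp [h]
  have hdecomp : s = (fun i => max (s i) 0) - aneg := by
    funext i
    rw [ha]
    simp only [Pi.sub_apply]
    rcases le_total (s i) 0 with h | h
    · rw [max_eq_right h, max_eq_left (by linarith : (0:ℝ) ≤ -s i)]; ring
    · rw [max_eq_left h, max_eq_right (by linarith : -s i ≤ 0)]; ring
  have hcross : aneg ⬝ᵥ (N *ᵥ (fun i => max (s i) 0)) ≤ 0 := by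
    simp only [dotProduct, mulVec]
    refine Finset.sum_nonpos fun i _ => ?_
    rw [Finset.mul_sum]
    refine Finset.sum_nonpos fun j _ => ?_
    rcases eq_or_ne i j with rfl | hij
    · rcases le_total (s i) 0 with h | h
      · rw [max_eq_right h]; simp
      · have hz : aneg i = 0 := by rw [ha]; exact max_eq_right (by linarith)
        rw [hz]; simp
    · have hN0 : N i j ≤ 0 := (hNoff i j hij) ▸ hZ i j hij
      exact mul_nonpos_of_nonneg_of_nonpos (haneg0 i)
        (mul_nonpos_of_nonpos_of_nonneg hN0 (le_max_right _ _))
  have key : aneg ⬝ᵥ (N *ᵥ aneg) ≤ 0 := by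
    have hds : aneg ⬝ᵥ (N *ᵥ s) = aneg ⬝ᵥ (N *ᵥ (fun i => max (s i) 0)) - aneg ⬝ᵥ (N *ᵥ aneg) := by
      conv_lhs => rw [hdecomp]
      rw [mulVec_sub, dotProduct_sub]
    linarith
  have haneg_zero : aneg = 0 := by
    by_contra h
    have hpd := hNpd.dotProduct_mulVec_pos h
    rw [star_trivial] at hpd
    linarith
  have hs0 : ∀ i, 0 ≤ s i := by
    intro i
    have h1 : aneg i = 0 := congrFun haneg_zero i
    have h2 : -s i ≤ aneg i := le_max_left _ _
    rw [h1] at h2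
    linarith
  set y : Fin d → ℝ := fun i => if Sp i then s i else 0 with hy
  have hNy : N *ᵥ y = 0 := by
    funext i
    have hval : (N *ᵥ y) i = ∑ j, N i j * y j := rfl
    by_cases hi : Sp i
    · have h1 : (N *ᵥ y) i = (N *ᵥ s) i := by
        rw [hval]
        have h2 : (N *ᵥ s) i = ∑ j, N i j * s j := rfl
        rw [h2]
        refine Finset.sum_congr rfl fun j _ => ?_
        by_cases hj : Sp j
        · rw [hy]; simp [hj]
        · have hij : i ≠ j := fun h => hj (h ▸ hi)
          have : N i j = 0 := by rw [hNoff i j hij]; exact hblock' i j hi hj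
          rw [this, hy]; simp
      rw [h1, hNs]
      simp [hr, hi]
    · have h1 : (N *ᵥ y) i = 0 := by
        rw [hval]
        refine Finset.sum_eq_zero fun j _ => ?_
        by_cases hj : Sp j
        · have hij : i ≠ j := fun h => hi (h ▸ hj)
          have : N i j = 0 := by rw [hNoff i j hij]; exact hblock i j hi hj
          rw [this, zero_mul]
        · rw [hy]; simp [hj]
      rw [h1]; rfl
  have hyz : y = 0 := by
    by_contra h
    have hpd := hNpd.dotProduct_mulVec_pos h
    rw [star_trivial, hNy] at hpd
    simp at hpd
  have hsSp : ∀ i, Sp i → s i = 0 := by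
    intro i hi
    have := congrFun hyz i
    rw [hy] at this
    simpa [hi] using this
  have hsSc : ∀ i, ¬ Sp i → 0 < s i := by
    intro i hi
    rcases (hs0 i).lt_or_eq with h | h
    · exact h
    · exfalso
      have h1 : (N *ᵥ s) i = 1 := by rw [hNs, hr]; simp [hi]
      have h2 : (N *ᵥ s) i ≤ 0 := by
        have hval : (N *ᵥ s) i = ∑ j, N i j * s j := rfl
        rw [hval]
        refine Finset.sum_nonpos fun j _ => ?_
        rcases eq_or_ne i j with rfl | hij
        · rw [← h]; simp
        · exact mul_nonpos_of_nonpos_of_nonneg ((hNoff i j hij) ▸ hZ i j hij) (hs0 j)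
      linarith
  refine ⟨fun i => u i + s i, ?_, ?_⟩
  · intro i
    show 0 < u i + s i
    by_cases hi : Sp i
    · exact add_pos_of_pos_of_nonneg (huS i hi) (hs0 i)
    · rw [huSc i hi]
      simpa using hsSc i hi
  · intro i
    have hMt : (M *ᵥ fun k => u k + s k) = M *ᵥ u + M *ᵥ s := by
      rw [← mulVec_add]; rfl
    rw [hMt, huker]
    have hMs : (M *ᵥ s) i = (N *ᵥ s) i - (if Sp i then 1 else 0) * s i := by
      have h1 : (N *ᵥ s) i = (M *ᵥ s) i + (if Sp i then 1 else 0) * s i := by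
        rw [hN, add_mulVec]
        simp only [Pi.add_apply]
        congr 1
        simp [mulVec, dotProduct, Matrix.diagonal_apply, Finset.sum_ite_eq]
      linarith
    have : (0 : Fin d → ℝ) i + (M *ᵥ s) i = (M *ᵥ s) i := by simp
    rw [Pi.add_apply, this, hMs, hNs]
    by_cases hi : Sp i
    · rw [hsSp i hi, hr]; simp [hi]
    · rw [hr]; simp [hi]


variable {d : ℕ}

-- helper sum lemmas
lemma sum_two_ite {ι : Type*} [Fintype ι] [DecidableEq ι] {x y : ι} (hxy : x ≠ y) (X Y : ℂ) :
    ∑ c, ((if c = x then X else 0) + (if c = y then Y else 0)) = X + Y := by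
  rw [Finset.sum_add_distrib]
  simp [Finset.sum_ite_eq']

lemma sum_one_ite {ι : Type*} [Fintype ι] [DecidableEq ι] (x : ι) (X : ℂ) :
    ∑ c, (if c = x then X else 0) = X := by
  simp [Finset.sum_ite_eq']

lemma sum_fst_ite (i : Fin d) (F : Fin d → ℂ) :
    ∑ kl : Fin d × Fin d, (if kl.1 = i ∧ kl.2 ≠ i then F kl.2 else 0)
      = ∑ l, (if l = i then 0 else F l) := by
  rw [Fintype.sum_prod_type]
  rw [Finset.sum_eq_single i]
  · refine Finset.sum_congr rfl fun l _ => ?_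
    rcases eq_or_ne l i with rfl | h
    · simp
    · simp [h]
  · intro k _ hk
    refine Finset.sum_eq_zero fun l _ => ?_
    simp [hk]
  · intro h
    exact absurd (Finset.mem_univ i) h

lemma sum_snd_ite (i : Fin d) (F : Fin d → ℂ) :
    ∑ kl : Fin d × Fin d, (if kl.2 = i ∧ kl.1 ≠ i then F kl.1 else 0)
      = ∑ k, (if k = i then 0 else F k) := by
  rw [Fintype.sum_prod_type]
  rw [Finset.sum_comm]
  rw [Finset.sum_eq_single i]
  · refine Finset.sum_congr rfl fun l _ => ?_
    rcases eq_or_ne l i with rfl | h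
    · simp
    · simp [h]
  · intro k _ hk
    refine Finset.sum_eq_zero fun l _ => ?_
    simp [hk]
  · intro h
    exact absurd (Finset.mem_univ i) h

namespace Stmt8Aux

noncomputable def bb (B : Matrix (Fin d) (Fin d) ℂ) (i j : Fin d) : ℝ := ‖B i j‖
noncomputable def aa (A : Matrix (Fin d) (Fin d) ℂ) (i j : Fin d) : ℝ := (A i j).re
noncomputable def cc (B : Matrix (Fin d) (Fin d) ℂ) (t : Fin d → ℝ) (i j : Fin d) : ℝ :=
  t j * bb B i j / t i
noncomputable def pp (A B : Matrix (Fin d) (Fin d) ℂ) (i j : Fin d) : ℝ :=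
  bb B i j * Real.sqrt (aa A i j / aa A j i)
noncomputable def DD (B : Matrix (Fin d) (Fin d) ℂ) (t : Fin d → ℝ) (i : Fin d) : ℝ :=
  (B i i).re - ∑ j, (if j = i then 0 else cc B t i j)

section scalars

variable {A B : Matrix (Fin d) (Fin d) ℂ} {t : Fin d → ℝ}
variable (hA : ∀ i j, (A i j).im = 0 ∧ 0 ≤ (A i j).re)
variable (hB : B.PosSemidef)
variable (hAB : ∀ i j, ‖B i j‖ ^ 2 ≤ (A i j).re * (A j i).re)
variable (ht : ∀ i, 0 < t i)

lemma bb_nonneg (i j : Fin d) : 0 ≤ bb B i j := norm_nonneg _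

include hB in
lemma bb_symm (i j : Fin d) : bb B i j = bb B j i := by
  unfold bb
  rw [← hB.isHermitian.apply j i]; simp

include hA in
lemma aa_nonneg (i j : Fin d) : 0 ≤ aa A i j := (hA i j).2

include hAB in
lemma bb_sq_le (i j : Fin d) : bb B i j ^ 2 ≤ aa A i j * aa A j i := hAB i j

include hAB hA in
lemma aa_pos_of_bb_ne (i j : Fin d) (h : bb B i j ≠ 0) : 0 < aa A i j ∧ 0 < aa A j i := by
  have h1 : 0 < bb B i j ^ 2 := by positivity
  have h2 := bb_sq_le hAB i j
  constructor
  · rcases (aa_nonneg hA i j).lt_or_eq with h3 | h3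
    · exact h3
    · exfalso; rw [← h3] at h2; simp at h2; exact h h2
  · rcases (aa_nonneg hA j i).lt_or_eq with h3 | h3
    · exact h3
    · exfalso; rw [← h3] at h2; simp at h2; exact h h2

include ht in
lemma cc_nonneg (i j : Fin d) : 0 ≤ cc B t i j := by
  unfold cc
  have := bb_nonneg (B := B) i j
  have h1 := (ht i).le
  have h2 := (ht j).le
  positivity

include ht hB in
lemma cc_mul (i j : Fin d) : cc B t i j * cc B t j i = bb B i j ^ 2 := by
  unfold cc
  rw [← bb_symm hB i j]
  field_simp [(ht i).ne', (ht j).ne']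

include ht in
lemma cc_eq_zero_iff (i j : Fin d) : cc B t i j = 0 ↔ bb B i j = 0 := by
  unfold cc
  rw [div_eq_zero_iff, mul_eq_zero]
  constructor
  · rintro (h | h)
    · rcases h with h | h
      · exact absurd h (ht j).ne'
      · exact h
    · exact absurd h (ht i).ne'
  · intro h; exact Or.inl (Or.inr h)

lemma pp_nonneg (i j : Fin d) : 0 ≤ pp A B i j :=
  mul_nonneg (bb_nonneg i j) (Real.sqrt_nonneg _)

lemma pp_eq_zero (i j : Fin d) (h : bb B i j = 0) : pp A B i j = 0 := by
  unfold pp; rw [h, zero_mul]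

include hA hAB hB in
lemma pp_mul (i j : Fin d) : pp A B i j * pp A B j i = bb B i j ^ 2 := by
  by_cases h : bb B i j = 0
  · rw [pp_eq_zero i j h, pp_eq_zero j i (by rw [← bb_symm hB]; exact h), h]
    ring
  · obtain ⟨h1, h2⟩ := aa_pos_of_bb_ne hA hAB i j h
    have key : Real.sqrt (aa A i j / aa A j i) * Real.sqrt (aa A j i / aa A i j) = 1 := by
      rw [← Real.sqrt_mul (by positivity)]
      rw [show (aa A i j / aa A j i) * (aa A j i / aa A i j) = 1 by field_simp]
      exact Real.sqrt_one
    unfold pp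
    rw [← bb_symm hB i j]
    calc bb B i j * Real.sqrt (aa A i j / aa A j i) * (bb B i j * Real.sqrt (aa A j i / aa A i j))
        = bb B i j ^2 * (Real.sqrt (aa A i j / aa A j i) * Real.sqrt (aa A j i / aa A i j)) := by
          ring
    _ = bb B i j ^ 2 := by rw [key, mul_one]

include hA hAB in
lemma pp_le (i j : Fin d) : pp A B i j ≤ aa A i j := by
  by_cases h : bb B i j = 0
  · rw [pp_eq_zero i j h]; exact aa_nonneg hA i j
  · obtain ⟨h1, h2⟩ := aa_pos_of_bb_ne hA hAB i j h
    have hble : bb B i j ≤ Real.sqrt (aa A i j * aa A j i) := by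
      have := Real.sqrt_le_sqrt (bb_sq_le hAB i j)
      rwa [Real.sqrt_sq (bb_nonneg i j)] at this
    have h3 : pp A B i j ≤ Real.sqrt (aa A i j * aa A j i) * Real.sqrt (aa A i j / aa A j i) :=
      mul_le_mul_of_nonneg_right hble (Real.sqrt_nonneg _)
    rw [← Real.sqrt_mul (by positivity)] at h3
    have heq : aa A i j * aa A j i * (aa A i j / aa A j i) = aa A i j ^ 2 := by
      field_simp
    rwa [heq, Real.sqrt_sq h1.le] at h3

end scalars

end Stmt8Aux

namespace Stmt8Aux

noncomputable def vL (A B : Matrix (Fin d) (Fin d) ℂ) (t : Fin d → ℝ) (k l : Fin d) :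
    Fin d → ℂ := fun i =>
  if k = l then (if i = k then (Real.sqrt (Real.sqrt (DD B t k)) : ℂ) else 0)
  else if i = k then (Real.sqrt (cc B t k l / 2) : ℂ)
  else if i = l then (Real.sqrt (pp A B l k / 2) : ℂ) else 0

noncomputable def wL (A B : Matrix (Fin d) (Fin d) ℂ) (t : Fin d → ℝ) (k l : Fin d) :
    Fin d → ℂ := fun i =>
  if k = l then (if i = k then (Real.sqrt (Real.sqrt (DD B t k)) : ℂ) else 0)
  else if i = k then B k l / (bb B k l : ℂ)
  else if i = l then (Real.sqrt (pp A B k l / cc B t k l) : ℂ) else 0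

noncomputable def vR (A B : Matrix (Fin d) (Fin d) ℂ) (k l : Fin d) : Fin d → ℂ := fun i =>
  if k = l then 0 else if i = k then (Real.sqrt (aa A k l - pp A B k l) : ℂ) else 0

noncomputable def wR (k l : Fin d) : Fin d → ℂ := fun i =>
  if k = l then (0:ℂ) else if i = l then 1 else 0

section terms

variable {A B : Matrix (Fin d) (Fin d) ℂ} {t : Fin d → ℝ}
variable (hA : ∀ i j, (A i j).im = 0 ∧ 0 ≤ (A i j).re)
variable (hB : B.PosSemidef)
variable (hAB : ∀ i j, ‖B i j‖ ^ 2 ≤ (A i j).re * (A j i).re)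
variable (ht : ∀ i, 0 < t i)

include hA hB hAB ht in
lemma key_real (k l : Fin d) (hb : bb B k l ≠ 0) :
    Real.sqrt (cc B t k l / 2) * Real.sqrt (pp A B l k / 2)
      * Real.sqrt (pp A B k l / cc B t k l) = bb B k l / 2 := by
  have hc : cc B t k l ≠ 0 := fun h => hb ((cc_eq_zero_iff ht k l).1 h)
  have hc0 : 0 ≤ cc B t k l := cc_nonneg ht k l
  have hbnn : 0 ≤ bb B k l := bb_nonneg k l
  have hp1 : 0 ≤ pp A B l k := pp_nonneg l k
  have hp2 : 0 ≤ pp A B k l := pp_nonneg k l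
  rw [← Real.sqrt_mul (by positivity), ← Real.sqrt_mul (by positivity)]
  have hm : pp A B k l * pp A B l k = bb B k l ^ 2 := pp_mul hA hB hAB k l
  have harg : cc B t k l / 2 * (pp A B l k / 2) * (pp A B k l / cc B t k l)
      = (bb B k l / 2) ^ 2 := by
    field_simp
    nlinarith [hm]
  rw [harg, Real.sqrt_sq (by positivity)]

lemma phase_mul (k l : Fin d) (hb : bb B k l ≠ 0) :
    (B k l / (bb B k l : ℂ)) * star (B k l / (bb B k l : ℂ)) = 1 := by
  rw [Complex.star_def, map_div₀, Complex.conj_ofReal]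
  rw [div_mul_div_comm, Complex.mul_conj, ← Complex.ofReal_mul]
  unfold bb at *
  rw [← Complex.sq_norm]
  push_cast
  have hbc : (‖B k l‖ : ℂ) ≠ 0 := by exact_mod_cast hb
  rw [sq, div_self (mul_ne_zero hbc hbc)]

lemma B_zero_of_bb (k l : Fin d) (h : bb B k l = 0) : B k l = 0 := by
  unfold bb at h
  exact norm_eq_zero.1 h

include hB in
lemma star_B (i j : Fin d) : star (B j i) = B i j := hB.isHermitian.apply i j

-- the "z" value of a left column, its self-products
include ht in
lemma zsq_k (k l : Fin d) (hkl : k ≠ l) :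
    (vL A B t k l k * wL A B t k l k) * star (vL A B t k l k * wL A B t k l k)
      = ((cc B t k l / 2 : ℝ) : ℂ) := by
  simp only [vL, wL, if_neg hkl, if_pos rfl]
  by_cases hb : bb B k l = 0
  · rw [B_zero_of_bb k l hb, (cc_eq_zero_iff ht k l).2 hb]
    simp
  · have hbc : (bb B k l : ℂ) ≠ 0 := by exact_mod_cast hb
    have hcnn : 0 ≤ cc B t k l := cc_nonneg ht k l
    have h1 : (Real.sqrt (cc B t k l / 2) : ℂ) * star (Real.sqrt (cc B t k l / 2) : ℂ)
        = ((cc B t k l / 2 : ℝ) : ℂ) := by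
      rw [Complex.star_def, Complex.conj_ofReal, ← Complex.ofReal_mul,
        Real.mul_self_sqrt (by positivity)]
    calc (↑(Real.sqrt (cc B t k l / 2)) * (B k l / ↑(bb B k l)))
          * star (↑(Real.sqrt (cc B t k l / 2)) * (B k l / ↑(bb B k l)))
        = ((Real.sqrt (cc B t k l / 2) : ℂ) * star (Real.sqrt (cc B t k l / 2) : ℂ))
          * ((B k l / (bb B k l : ℂ)) * star (B k l / (bb B k l : ℂ))) := by
          rw [star_mul']
          ring
    _ = ((cc B t k l / 2 : ℝ) : ℂ) := by
        rw [h1, phase_mul k l hb, mul_one]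

include hA hB hAB ht in
lemma zsq_l (k l : Fin d) (hkl : k ≠ l) :
    (vL A B t k l l * wL A B t k l l) * star (vL A B t k l l * wL A B t k l l)
      = ((cc B t l k / 2 : ℝ) : ℂ) := by
  simp only [vL, wL, if_neg hkl, if_neg (Ne.symm hkl), eq_self_iff_true, if_true]
  by_cases hb : bb B k l = 0
  · have hp1 : pp A B l k = 0 := pp_eq_zero l k (by rw [← bb_symm hB]; exact hb)
    have hc1 : cc B t l k = 0 := (cc_eq_zero_iff ht l k).2 (by rw [← bb_symm hB]; exact hb)
    rw [hp1, hc1]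
    simp
  · have hcln : cc B t k l ≠ 0 := fun h => hb ((cc_eq_zero_iff ht k l).1 h)
    have hcnn : 0 ≤ cc B t k l := cc_nonneg ht k l
    have hp1 : 0 ≤ pp A B l k := pp_nonneg l k
    have hp2 : 0 ≤ pp A B k l := pp_nonneg k l
    have hstar : star ((Real.sqrt (pp A B l k / 2) : ℂ) * (Real.sqrt (pp A B k l / cc B t k l) : ℂ))
        = (Real.sqrt (pp A B l k / 2) : ℂ) * (Real.sqrt (pp A B k l / cc B t k l) : ℂ) := by
      rw [star_mul']
      rw [show star ((Real.sqrt (pp A B k l / cc B t k l) : ℝ) : ℂ)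
          = ((Real.sqrt (pp A B k l / cc B t k l) : ℝ) : ℂ) from Complex.conj_ofReal _]
      rw [show star ((Real.sqrt (pp A B l k / 2) : ℝ) : ℂ)
          = ((Real.sqrt (pp A B l k / 2) : ℝ) : ℂ) from Complex.conj_ofReal _]
    rw [hstar]
    rw [show ((Real.sqrt (pp A B l k / 2) : ℂ) * (Real.sqrt (pp A B k l / cc B t k l) : ℂ))
        * ((Real.sqrt (pp A B l k / 2) : ℂ) * (Real.sqrt (pp A B k l / cc B t k l) : ℂ))
        = (((Real.sqrt (pp A B l k / 2) * Real.sqrt (pp A B l k / 2))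
            * (Real.sqrt (pp A B k l / cc B t k l) * Real.sqrt (pp A B k l / cc B t k l)) : ℝ) : ℂ)
        from by push_cast; ring]
    rw [Real.mul_self_sqrt (by positivity), Real.mul_self_sqrt (by positivity)]
    congr 1
    have hcc := cc_mul hB ht k l
    have hpp := pp_mul hA hB hAB k l
    have : cc B t l k = bb B k l ^ 2 / cc B t k l := by
      field_simp at hcc ⊢
      linarith [hcc]
    rw [this, ← hpp]
    field_simp

lemma termAB_eq (v w : ℂ) : (v * star v) * star (w * star w) = (v * w) * star (v * w) := by
  rw [star_mul', star_mul']
  simp only [star_star]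
  ring

include hA hB hAB ht in
lemma zprod_kl (k l : Fin d) (hkl : k ≠ l) :
    (vL A B t k l k * wL A B t k l k) * star (vL A B t k l l * wL A B t k l l)
      = B k l / 2 := by
  simp only [vL, wL, if_neg hkl, if_neg (Ne.symm hkl), eq_self_iff_true, if_true]
  by_cases hb : bb B k l = 0
  · have hc1 : cc B t k l = 0 := (cc_eq_zero_iff ht k l).2 hb
    rw [B_zero_of_bb k l hb, hc1]
    simp
  · have hbc : (bb B k l : ℂ) ≠ 0 := by exact_mod_cast hb
    have hcnn : 0 ≤ cc B t k l := cc_nonneg ht k l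
    have hp1 : 0 ≤ pp A B l k := pp_nonneg l k
    have hp2 : 0 ≤ pp A B k l := pp_nonneg k l
    have hkey := key_real hA hB hAB ht k l hb
    have hstar : star ((Real.sqrt (pp A B l k / 2) : ℂ) * (Real.sqrt (pp A B k l / cc B t k l) : ℂ))
        = (Real.sqrt (pp A B l k / 2) : ℂ) * (Real.sqrt (pp A B k l / cc B t k l) : ℂ) := by
      rw [star_mul']
      rw [show star ((Real.sqrt (pp A B k l / cc B t k l) : ℝ) : ℂ)
          = ((Real.sqrt (pp A B k l / cc B t k l) : ℝ) : ℂ) from Complex.conj_ofReal _]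
      rw [show star ((Real.sqrt (pp A B l k / 2) : ℝ) : ℂ)
          = ((Real.sqrt (pp A B l k / 2) : ℝ) : ℂ) from Complex.conj_ofReal _]
    rw [hstar]
    rw [show (↑(Real.sqrt (cc B t k l / 2)) * (B k l / ↑(bb B k l)))
        * ((Real.sqrt (pp A B l k / 2) : ℂ) * (Real.sqrt (pp A B k l / cc B t k l) : ℂ))
        = B k l * ((((Real.sqrt (cc B t k l / 2) * Real.sqrt (pp A B l k / 2)
            * Real.sqrt (pp A B k l / cc B t k l)) : ℝ) : ℂ) / (bb B k l : ℂ)) from by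
          push_cast; ring]
    rw [hkey]
    push_cast
    rw [div_right_comm, div_self hbc, mul_one_div]

include hA hB hAB ht in
lemma zprod_lk (k l : Fin d) (hkl : k ≠ l) :
    (vL A B t k l l * wL A B t k l l) * star (vL A B t k l k * wL A B t k l k)
      = B l k / 2 := by
  have h := congrArg star (zprod_kl hA hB hAB ht k l hkl)
  rw [star_mul', star_star] at h
  rw [show star (B k l / 2) = B l k / 2 from by
    rw [star_div₀, star_B hB l k]; norm_num] at h
  rw [← h]
  ring

-- A-term values, off-diagonal
include ht in
lemma vwsq_kl (k l : Fin d) (hkl : k ≠ l) :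
    (vL A B t k l k * star (vL A B t k l k)) * star (wL A B t k l l * star (wL A B t k l l))
      = ((pp A B k l / 2 : ℝ) : ℂ) := by
  simp only [vL, wL, if_neg hkl, if_neg (Ne.symm hkl), eq_self_iff_true, if_true]
  have hcnn : 0 ≤ cc B t k l := cc_nonneg ht k l
  have hpnn : 0 ≤ pp A B k l := pp_nonneg k l
  have e1 : ((Real.sqrt (cc B t k l / 2) : ℝ) : ℂ) * star ((Real.sqrt (cc B t k l / 2) : ℝ) : ℂ)
      = ((cc B t k l / 2 : ℝ) : ℂ) := by
    rw [Complex.star_def, Complex.conj_ofReal, ← Complex.ofReal_mul,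
      Real.mul_self_sqrt (by positivity)]
  have e2 : ((Real.sqrt (pp A B k l / cc B t k l) : ℝ) : ℂ)
      * star ((Real.sqrt (pp A B k l / cc B t k l) : ℝ) : ℂ)
      = ((pp A B k l / cc B t k l : ℝ) : ℂ) := by
    rw [Complex.star_def, Complex.conj_ofReal, ← Complex.ofReal_mul,
      Real.mul_self_sqrt (by positivity)]
  rw [e1, e2, Complex.star_def, Complex.conj_ofReal, ← Complex.ofReal_mul]
  congr 1
  by_cases hb : bb B k l = 0
  · rw [(cc_eq_zero_iff ht k l).2 hb, pp_eq_zero k l hb]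
    norm_num
  · have hc : cc B t k l ≠ 0 := fun h => hb ((cc_eq_zero_iff ht k l).1 h)
    field_simp

include hB in
omit ht in
lemma vwsq_lk (k l : Fin d) (hkl : k ≠ l) :
    (vL A B t k l l * star (vL A B t k l l)) * star (wL A B t k l k * star (wL A B t k l k))
      = ((pp A B l k / 2 : ℝ) : ℂ) := by
  simp only [vL, wL, if_neg hkl, if_neg (Ne.symm hkl), eq_self_iff_true, if_true]
  have hpnn : 0 ≤ pp A B l k := pp_nonneg l k
  have e1 : ((Real.sqrt (pp A B l k / 2) : ℝ) : ℂ) * star ((Real.sqrt (pp A B l k / 2) : ℝ) : ℂ)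
      = ((pp A B l k / 2 : ℝ) : ℂ) := by
    rw [Complex.star_def, Complex.conj_ofReal, ← Complex.ofReal_mul,
      Real.mul_self_sqrt (by positivity)]
  rw [e1]
  by_cases hb : bb B k l = 0
  · have : pp A B l k = 0 := pp_eq_zero l k (by rw [← bb_symm hB]; exact hb)
    rw [this]
    simp
  · rw [show star ((B k l / (bb B k l : ℂ)) * star (B k l / (bb B k l : ℂ)))
        = (B k l / (bb B k l : ℂ)) * star (B k l / (bb B k l : ℂ)) from by
      rw [star_mul', star_star]; ring]
    rw [phase_mul k l hb, mul_one]

-- value of the diagonal (k = k) column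
lemma zsq_diag (k : Fin d) (hD : 0 ≤ DD B t k) :
    (vL A B t k k k * wL A B t k k k) * star (vL A B t k k k * wL A B t k k k)
      = ((DD B t k : ℝ) : ℂ) := by
  simp only [vL, wL, eq_self_iff_true, if_true]
  have e0 : ((Real.sqrt (Real.sqrt (DD B t k)) : ℝ) : ℂ)
      * ((Real.sqrt (Real.sqrt (DD B t k)) : ℝ) : ℂ) = ((Real.sqrt (DD B t k) : ℝ) : ℂ) := by
    rw [← Complex.ofReal_mul, Real.mul_self_sqrt (Real.sqrt_nonneg _)]
  rw [e0]
  rw [Complex.star_def, Complex.conj_ofReal, ← Complex.ofReal_mul, Real.mul_self_sqrt hD]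

-- right column facts
lemma zR_zero (k l i : Fin d) : vR A B k l i * wR k l i = 0 := by
  unfold vR wR
  by_cases hkl : k = l
  · simp [hkl]
  · rw [if_neg hkl, if_neg hkl]
    by_cases hik : i = k
    · have : i ≠ l := fun h => hkl (hik.symm.trans h)
      simp [this]
    · simp [hik]

include hA hAB in
lemma vwsq_R (k l : Fin d) (hkl : k ≠ l) :
    (vR A B k l k * star (vR A B k l k)) * star (wR k l l * star (wR k l l))
      = ((aa A k l - pp A B k l : ℝ) : ℂ) := by
  unfold vR wR
  rw [if_neg hkl, if_neg hkl, if_pos rfl, if_pos rfl]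
  have hnn : 0 ≤ aa A k l - pp A B k l := sub_nonneg.2 (pp_le hA hAB k l)
  rw [Complex.star_def, Complex.conj_ofReal, ← Complex.ofReal_mul, Real.mul_self_sqrt hnn]
  simp

-- pointwise term lemmas (left block, off-diagonal entry)
include hA hB hAB ht in
lemma termB_L_off (i j k l : Fin d) (hij : i ≠ j) :
    (vL A B t k l i * wL A B t k l i) * star (vL A B t k l j * wL A B t k l j)
      = (if (k,l) = (i,j) then B i j / 2 else 0)
        + (if (k,l) = (j,i) then B i j / 2 else 0) := by
  have hne1 : ∀ m : Fin d, ((m,m) : Fin d × Fin d) ≠ (i,j) := by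
    intro m h; rw [Prod.mk.injEq] at h; exact hij (h.1.symm.trans h.2)
  have hne2 : ∀ m : Fin d, ((m,m) : Fin d × Fin d) ≠ (j,i) := by
    intro m h; rw [Prod.mk.injEq] at h; exact hij (h.2.symm.trans h.1)
  by_cases hkl : k = l
  · subst hkl
    rw [if_neg (hne1 k), if_neg (hne2 k), add_zero]
    by_cases hik : i = k
    · have hjk : j ≠ k := fun h => hij (hik.trans h.symm)
      simp only [vL, wL, eq_self_iff_true, if_true, if_neg hjk]
      simp
    · simp only [vL, wL, eq_self_iff_true, if_true, if_neg hik]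
      simp
  · by_cases hik : i = k
    · subst hik
      by_cases hjl : j = l
      · subst hjl
        rw [if_pos rfl, if_neg (by
          intro h; rw [Prod.mk.injEq] at h; exact hij h.1), add_zero]
        exact zprod_kl hA hB hAB ht i j hkl
      · have hjk : j ≠ i := Ne.symm hij
        rw [if_neg (by intro h; rw [Prod.mk.injEq] at h; exact hjl h.2.symm),
          if_neg (by intro h; rw [Prod.mk.injEq] at h; exact hjk h.1.symm), add_zero]
        have hzj : vL A B t i l j * wL A B t i l j = 0 := by
          simp only [vL, wL, if_neg hkl, if_neg (Ne.symm hij), if_neg hjl]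
          simp
        rw [hzj]
        simp
    · by_cases hil : i = l
      · subst hil
        by_cases hjk : j = k
        · subst hjk
          rw [if_neg (by intro h; rw [Prod.mk.injEq] at h; exact hij h.1.symm),
            if_pos rfl, zero_add]
          exact zprod_lk hA hB hAB ht j i hkl
        · rw [if_neg (by intro h; rw [Prod.mk.injEq] at h; exact hik h.1.symm),
            if_neg (by intro h; rw [Prod.mk.injEq] at h; exact hjk h.1.symm), add_zero]
          have hjl : j ≠ i := Ne.symm hij
          have hzj : vL A B t k i j * wL A B t k i j = 0 := by
            simp only [vL, wL, if_neg hkl, if_neg (fun h => hjk h : ¬j = k), if_neg hjl]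
            simp
          rw [hzj]
          simp
      · rw [if_neg (by intro h; rw [Prod.mk.injEq] at h; exact hik h.1.symm),
          if_neg (by intro h; rw [Prod.mk.injEq] at h; exact hil h.2.symm), add_zero]
        have hzi : vL A B t k l i * wL A B t k l i = 0 := by
          simp only [vL, wL, if_neg hkl, if_neg hik, if_neg hil]
          simp
        rw [hzi]
        simp

include hA hB hAB ht in
lemma termA_L_off (i j k l : Fin d) (hij : i ≠ j) :
    (vL A B t k l i * star (vL A B t k l i)) * star (wL A B t k l j * star (wL A B t k l j))
      = (if (k,l) = (i,j) then ((pp A B i j / 2 : ℝ) : ℂ) else 0)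
        + (if (k,l) = (j,i) then ((pp A B i j / 2 : ℝ) : ℂ) else 0) := by
  have hne1 : ∀ m : Fin d, ((m,m) : Fin d × Fin d) ≠ (i,j) := by
    intro m h; rw [Prod.mk.injEq] at h; exact hij (h.1.symm.trans h.2)
  have hne2 : ∀ m : Fin d, ((m,m) : Fin d × Fin d) ≠ (j,i) := by
    intro m h; rw [Prod.mk.injEq] at h; exact hij (h.2.symm.trans h.1)
  by_cases hkl : k = l
  · subst hkl
    rw [if_neg (hne1 k), if_neg (hne2 k), add_zero]
    by_cases hik : i = k
    · have hjk : j ≠ k := fun h => hij (hik.trans h.symm)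
      simp only [vL, wL, eq_self_iff_true, if_true, if_neg hjk]
      simp
    · simp only [vL, wL, eq_self_iff_true, if_true, if_neg hik]
      simp
  · by_cases hik : i = k
    · subst hik
      by_cases hjl : j = l
      · subst hjl
        rw [if_pos rfl, if_neg (by
          intro h; rw [Prod.mk.injEq] at h; exact hij h.1), add_zero]
        exact vwsq_kl ht i j hkl
      · have hjk : j ≠ i := Ne.symm hij
        rw [if_neg (by intro h; rw [Prod.mk.injEq] at h; exact hjl h.2.symm),
          if_neg (by intro h; rw [Prod.mk.injEq] at h; exact hjk h.1.symm), add_zero]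
        have hzj : wL A B t i l j = 0 := by
          simp only [wL, if_neg hkl, if_neg (Ne.symm hij), if_neg hjl]
        rw [hzj]
        simp
    · by_cases hil : i = l
      · subst hil
        by_cases hjk : j = k
        · subst hjk
          rw [if_neg (by intro h; rw [Prod.mk.injEq] at h; exact hij h.1.symm),
            if_pos rfl, zero_add]
          exact vwsq_lk hB j i hkl
        · rw [if_neg (by intro h; rw [Prod.mk.injEq] at h; exact hik h.1.symm),
            if_neg (by intro h; rw [Prod.mk.injEq] at h; exact hjk h.1.symm), add_zero]
          have hjl : j ≠ i := Ne.symm hij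
          have hzj : wL A B t k i j = 0 := by
            simp only [wL, if_neg hkl, if_neg (fun h => hjk h : ¬j = k), if_neg hjl]
          rw [hzj]
          simp
      · rw [if_neg (by intro h; rw [Prod.mk.injEq] at h; exact hik h.1.symm),
          if_neg (by intro h; rw [Prod.mk.injEq] at h; exact hil h.2.symm), add_zero]
        have hzi : vL A B t k l i = 0 := by
          simp only [vL, if_neg hkl, if_neg hik, if_neg hil]
        rw [hzi]
        simp

-- pointwise term lemma (left block, diagonal entry); shared by A and B sums
include hA hB hAB ht in
lemma termB_L_diag (i k l : Fin d) (hD : 0 ≤ DD B t k) :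
    (vL A B t k l i * wL A B t k l i) * star (vL A B t k l i * wL A B t k l i)
      = (if (k,l) = (i,i) then ((DD B t i : ℝ) : ℂ) else 0)
        + (if k = i ∧ l ≠ i then ((cc B t i l / 2 : ℝ) : ℂ) else 0)
        + (if l = i ∧ k ≠ i then ((cc B t i k / 2 : ℝ) : ℂ) else 0) := by
  by_cases hkl : k = l
  · subst hkl
    by_cases hik : k = i
    · subst hik
      rw [if_pos rfl, if_neg (by rintro ⟨h1, h2⟩; exact h2 h1), add_zero, add_zero]
      exact zsq_diag k hD
    · rw [if_neg (by intro h; rw [Prod.mk.injEq] at h; exact hik h.1),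
        if_neg (by rintro ⟨h1, h2⟩; exact hik h1), add_zero, add_zero]
      have hz : vL A B t k k i * wL A B t k k i = 0 := by
        simp only [vL, wL, eq_self_iff_true, if_true, if_neg (fun h => hik (Eq.symm h))]
        simp
      rw [hz]
      simp
  · rw [if_neg (by intro h; rw [Prod.mk.injEq] at h; exact hkl (h.1.trans h.2.symm))]
    by_cases hik : i = k
    · subst hik
      have hli : l ≠ i := Ne.symm hkl
      rw [if_pos ⟨rfl, hli⟩, if_neg (by rintro ⟨h1, h2⟩; exact hli h1), zero_add, add_zero]
      exact zsq_k ht i l hkl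
    · by_cases hil : i = l
      · subst hil
        have hki : k ≠ i := hkl
        rw [if_neg (by rintro ⟨h1, h2⟩; exact hki h1), if_pos ⟨rfl, hki⟩, zero_add, zero_add]
        exact zsq_l hA hB hAB ht k i hkl
      · rw [if_neg (by rintro ⟨h1, h2⟩; exact hik h1.symm),
          if_neg (by rintro ⟨h1, h2⟩; exact hil h1.symm), add_zero, add_zero]
        have hz : vL A B t k l i * wL A B t k l i = 0 := by
          simp only [vL, wL, if_neg hkl, if_neg hik, if_neg hil]
          simp
        rw [hz]
        simp

include hA hAB in
omit hB ht in
lemma termB_R (i j k l : Fin d) :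
    (vR A B k l i * wR k l i) * star (vR A B k l j * wR k l j) = 0 := by
  rw [zR_zero, zero_mul]

include hA hAB in
omit hB ht in
lemma termA_R_off (i j k l : Fin d) (hij : i ≠ j) :
    (vR A B k l i * star (vR A B k l i)) * star (wR k l j * star (wR k l j))
      = (if (k,l) = (i,j) then ((aa A i j - pp A B i j : ℝ) : ℂ) else 0) := by
  by_cases hkl : k = l
  · rw [if_neg (by intro h; rw [Prod.mk.injEq] at h; exact hij ((h.1.symm.trans hkl).trans h.2))]
    have : vR A B k l i = 0 := by unfold vR; rw [if_pos hkl]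
    rw [this]
    simp
  · by_cases hik : i = k
    · by_cases hjl : j = l
      · subst hik; subst hjl
        rw [if_pos rfl]
        exact vwsq_R hA hAB i j hkl
      · rw [if_neg (by intro h; rw [Prod.mk.injEq] at h; exact hjl h.2.symm)]
        have : wR k l j = 0 := by unfold wR; rw [if_neg hkl, if_neg hjl]
        rw [this]
        simp
    · rw [if_neg (by intro h; rw [Prod.mk.injEq] at h; exact hik h.1.symm)]
      have : vR A B k l i = 0 := by unfold vR; rw [if_neg hkl, if_neg hik]
      rw [this]
      simp

include hA hAB in
omit hB ht in
lemma termA_R_diag (i k l : Fin d) :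
    (vR A B k l i * star (vR A B k l i)) * star (wR k l i * star (wR k l i)) = 0 := by
  by_cases hkl : k = l
  · have : vR A B k l i = 0 := by unfold vR; rw [if_pos hkl]
    rw [this]; simp
  · by_cases hik : i = k
    · have : wR k l i = 0 := by
        unfold wR; rw [if_neg hkl, if_neg (fun h => hkl ((hik.symm.trans h)))]
      rw [this]; simp
    · have : vR A B k l i = 0 := by unfold vR; rw [if_neg hkl, if_neg hik]
      rw [this]; simp

end terms

end Stmt8Aux

namespace Stmt8Aux

section assemble

variable {A B : Matrix (Fin d) (Fin d) ℂ} {t : Fin d → ℝ}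
variable (hdiag : ∀ i, A i i = B i i)
variable (hA : ∀ i j, (A i j).im = 0 ∧ 0 ≤ (A i j).re)
variable (hB : B.PosSemidef)
variable (hAB : ∀ i j, ‖B i j‖ ^ 2 ≤ (A i j).re * (A j i).re)
variable (ht : ∀ i, 0 < t i)
variable (hD : ∀ i, 0 ≤ DD B t i)

include hA hB hAB ht hD in
lemma sumB (i j : Fin d) :
    B i j = (∑ kl : Fin d × Fin d,
        (vL A B t kl.1 kl.2 i * wL A B t kl.1 kl.2 i)
          * star (vL A B t kl.1 kl.2 j * wL A B t kl.1 kl.2 j))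
      + (∑ kl : Fin d × Fin d,
        (vR A B kl.1 kl.2 i * wR kl.1 kl.2 i) * star (vR A B kl.1 kl.2 j * wR kl.1 kl.2 j)) := by
  have hR : (∑ kl : Fin d × Fin d,
      (vR A B kl.1 kl.2 i * wR kl.1 kl.2 i) * star (vR A B kl.1 kl.2 j * wR kl.1 kl.2 j)) = 0 :=
    Finset.sum_eq_zero fun kl _ => by rw [zR_zero, zero_mul]
  rw [hR, add_zero]
  rcases eq_or_ne i j with rfl | hij
  · rw [Finset.sum_congr rfl fun kl _ => termB_L_diag hA hB hAB ht i kl.1 kl.2 (hD kl.1)]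
    rw [Finset.sum_add_distrib, Finset.sum_add_distrib]
    have e1 : (∑ kl : Fin d × Fin d, if (kl.1, kl.2) = (i,i) then ((DD B t i : ℝ) : ℂ) else 0)
        = ((DD B t i : ℝ) : ℂ) := by
      rw [Finset.sum_congr rfl fun kl _ => by rw [Prod.mk.eta]]
      exact sum_one_ite (i,i) _
    have e2 := sum_fst_ite i (fun l => ((cc B t i l / 2 : ℝ) : ℂ))
    have e3 := sum_snd_ite i (fun k => ((cc B t i k / 2 : ℝ) : ℂ))
    rw [e1, e2, e3]
    have e4 : ∀ l : Fin d, (if l = i then (0:ℂ) else ((cc B t i l / 2 : ℝ) : ℂ))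
        = (((if l = i then 0 else cc B t i l / 2 : ℝ)) : ℂ) := by
      intro l; split <;> simp
    simp only [e4]
    rw [← Complex.ofReal_sum, ← Complex.ofReal_add, ← Complex.ofReal_add]
    have e5 : DD B t i + ((∑ l, if l = i then 0 else cc B t i l / 2)
        + (∑ l, if l = i then 0 else cc B t i l / 2)) = (B i i).re := by
      unfold DD
      have hsum : (∑ l, if l = i then (0:ℝ) else cc B t i l / 2)
          + (∑ l, if l = i then (0:ℝ) else cc B t i l / 2)
          = ∑ l, if l = i then (0:ℝ) else cc B t i l := by
        rw [← Finset.sum_add_distrib]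
        exact Finset.sum_congr rfl fun l _ => by split <;> ring
      rw [hsum]
      ring
    rw [add_assoc, e5]
    exact (diag_nonneg' hB i).1
  · rw [Finset.sum_congr rfl fun kl _ => termB_L_off hA hB hAB ht i j kl.1 kl.2 hij]
    simp only [Prod.mk.eta]
    rw [sum_two_ite (by intro h; rw [Prod.mk.injEq] at h; exact hij h.1) (B i j / 2) (B i j / 2)]
    ring

include hdiag hA hB hAB ht hD in
lemma sumA (i j : Fin d) :
    A i j = (∑ kl : Fin d × Fin d,
        (vL A B t kl.1 kl.2 i * star (vL A B t kl.1 kl.2 i))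
          * star (wL A B t kl.1 kl.2 j * star (wL A B t kl.1 kl.2 j)))
      + (∑ kl : Fin d × Fin d,
        (vR A B kl.1 kl.2 i * star (vR A B kl.1 kl.2 i))
          * star (wR kl.1 kl.2 j * star (wR kl.1 kl.2 j))) := by
  rcases eq_or_ne i j with rfl | hij
  · have hR : (∑ kl : Fin d × Fin d,
        (vR A B kl.1 kl.2 i * star (vR A B kl.1 kl.2 i))
          * star (wR kl.1 kl.2 i * star (wR kl.1 kl.2 i))) = 0 :=
      Finset.sum_eq_zero fun kl _ => termA_R_diag hA hAB i kl.1 kl.2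
    rw [hR, add_zero]
    rw [Finset.sum_congr rfl fun kl _ => termAB_eq _ _]
    rw [← add_zero (∑ kl : Fin d × Fin d,
        (vL A B t kl.1 kl.2 i * wL A B t kl.1 kl.2 i)
          * star (vL A B t kl.1 kl.2 i * wL A B t kl.1 kl.2 i))]
    rw [hdiag i]
    rw [show ((0:ℂ) = ∑ kl : Fin d × Fin d,
      (vR A B kl.1 kl.2 i * wR kl.1 kl.2 i) * star (vR A B kl.1 kl.2 i * wR kl.1 kl.2 i)) from
      (Finset.sum_eq_zero fun kl _ => by rw [zR_zero, zero_mul]).symm]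
    exact sumB hA hB hAB ht hD i i
  · rw [Finset.sum_congr (rfl : (Finset.univ : Finset (Fin d × Fin d)) = Finset.univ)
        fun kl _ => termA_L_off hA hB hAB ht i j kl.1 kl.2 hij,
      Finset.sum_congr (rfl : (Finset.univ : Finset (Fin d × Fin d)) = Finset.univ)
        fun kl _ => termA_R_off hA hAB i j kl.1 kl.2 hij]
    simp only [Prod.mk.eta]
    rw [sum_two_ite (by intro h; rw [Prod.mk.injEq] at h; exact hij h.1) _ _]
    rw [sum_one_ite (i,j) _]
    have hAij : A i j = ((aa A i j : ℝ) : ℂ) := by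
      unfold aa
      exact Complex.ext (by simp) (by simpa using (hA i j).1)
    rw [hAij]
    push_cast
    ring

end assemble

end Stmt8Aux


lemma partII {A B : Matrix (Fin d) (Fin d) ℂ}
    (hdiag : ∀ i, A i i = B i i)
    (hA : ∀ i j, (A i j).im = 0 ∧ 0 ≤ (A i j).re)
    (hB : B.PosSemidef)
    (hAB : ∀ i j, ‖B i j‖ ^ 2 ≤ (A i j).re * (A j i).re)
    (hM : (comparisonMatrix B).PosSemidef) : PCP A B := by
  obtain ⟨t, ht, hMt⟩ := exists_scaling hM (fun i j hij => by
    rw [cm_apply, if_neg hij]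
    exact neg_nonpos.2 (norm_nonneg _))
  have hD : ∀ i, 0 ≤ Stmt8Aux.DD B t i := by
    intro i
    have h0 := hMt i
    have hrow : (comparisonMatrix B *ᵥ t) i
        = (B i i).re * t i - ∑ j, (if j = i then 0 else ‖B i j‖ * t j) := by
      simp only [mulVec, dotProduct, cm_apply]
      have : ∀ j : Fin d, (if i = j then ‖B i j‖ else -‖B i j‖) * t j
          = (if j = i then (B i i).re * t i else 0)
            - (if j = i then 0 else ‖B i j‖ * t j) := by
        intro j
        rcases eq_or_ne j i with rfl | hji
        · rw [if_pos rfl, if_pos rfl, if_pos rfl, abs_diag hB j]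
          ring
        · rw [if_neg (Ne.symm hji), if_neg hji, if_neg hji]
          ring
      rw [Finset.sum_congr rfl fun j _ => this j, Finset.sum_sub_distrib]
      congr 1
      simp [Finset.sum_ite_eq']
    rw [hrow] at h0
    unfold Stmt8Aux.DD
    have hsum : ∑ j, (if j = i then 0 else Stmt8Aux.cc B t i j)
        = (∑ j, (if j = i then 0 else ‖B i j‖ * t j)) / t i := by
      rw [Finset.sum_div]
      refine Finset.sum_congr rfl fun j _ => ?_
      rcases eq_or_ne j i with rfl | hji
      · simp
      · rw [if_neg hji, if_neg hji]
        unfold Stmt8Aux.cc Stmt8Aux.bb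
        ring
    rw [hsum, sub_nonneg, div_le_iff₀ (ht i)]
    linarith
  apply pcp_of_sums A B ((Fin d × Fin d) ⊕ (Fin d × Fin d))
    (Sum.elim (fun kl => Stmt8Aux.vL A B t kl.1 kl.2) (fun kl => Stmt8Aux.vR A B kl.1 kl.2))
    (Sum.elim (fun kl => Stmt8Aux.wL A B t kl.1 kl.2) (fun kl => Stmt8Aux.wR kl.1 kl.2))
  · intro i j
    rw [Fintype.sum_sum_type]
    simp only [Sum.elim_inl, Sum.elim_inr]
    exact Stmt8Aux.sumA hdiag hA hB hAB ht hD i j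
  · intro i j
    rw [Fintype.sum_sum_type]
    simp only [Sum.elim_inl, Sum.elim_inr]
    exact Stmt8Aux.sumB hA hB hAB ht hD i j


theorem stmt8 {d : ℕ} (A B : Matrix (Fin d) (Fin d) ℂ)
    (hdiag : ∀ i, A i i = B i i)
    (hA : ∀ i j, (A i j).im = 0 ∧ 0 ≤ (A i j).re)
    (hB : B.PosSemidef)
    (hAB : ∀ i j, ‖B i j‖ ^ 2 ≤ (A i j).re * (A j i).re) :
    ((∀ i, ∑ j, (if j = i then 0 else ‖B i j‖) ≤ (B i i).re) →
        (comparisonMatrix B).PosSemidef) ∧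
    ((comparisonMatrix B).PosSemidef → PCP A B) := by
  exact ⟨fun hdd => partI hB hdd, fun hM => partII hdiag hA hB hAB hM⟩
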